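/- Let α₀ ∈ (0,2), α ∈ [α₀, 2), and set ϱ_α(s,x) := min(s^{-d/α}, s/|x|^{d+α}). There exists a constant c = c(d, α₀) > 0 such that for all s > 0 and x ∈ ℝ^d: ∫_{|z| > max(s^{1/α}, |x|/2)} ϱ_α(s, x+z) · (2−α)·|z|^{-d-α} dz ≤ c · (2−α) · s^{-1} · ϱ_α(s, x). -/

import Mathlib

open scoped ENNReal
open MeasureTheory

/-- `ϱ_α(s,x) := min(s^{-d/α}, s/|x|^{d+α})`, valued in `ℝ≥0∞`. -/
noncomputable def rhoA (d : ℕ) (α s : ℝ) (x : EuclideanSpace ℝ (Fin d)) : ℝ≥0∞ :=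
  min (ENNReal.ofReal s ^ (-(d : ℝ) / α))
    (ENNReal.ofReal s / ENNReal.ofReal ‖x‖ ^ ((d : ℝ) + α))

open Metric

noncomputable def tailC (d : ℕ) (α₀ : ℝ) : ℝ≥0∞ :=
  ∫⁻ z in {z : EuclideanSpace ℝ (Fin d) | 1 < ‖z‖}, ENNReal.ofReal (‖z‖ ^ (-(d : ℝ) - α₀))


lemma tailC_lt_top (d : ℕ) {α₀ : ℝ} (h : 0 < α₀) : tailC d α₀ < ∞ := by
  have hd : (Module.finrank ℝ (EuclideanSpace ℝ (Fin d)) : ℝ) < (d : ℝ) + α₀ := by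
    rw [finrank_euclideanSpace_fin]; linarith
  have hfin := finite_integral_one_add_norm
    (μ := (volume : Measure (EuclideanSpace ℝ (Fin d)))) hd
  have hS : MeasurableSet {z : EuclideanSpace ℝ (Fin d) | 1 < ‖z‖} :=
    (isOpen_lt continuous_const continuous_norm).measurableSet
  have hpt : ∀ z : EuclideanSpace ℝ (Fin d), 1 < ‖z‖ →
      ENNReal.ofReal (‖z‖ ^ (-(d : ℝ) - α₀)) ≤
        ENNReal.ofReal (2 ^ ((d : ℝ) + α₀)) * ENNReal.ofReal ((1 + ‖z‖) ^ (-((d : ℝ) + α₀))) := by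
    intro z hz
    rw [← ENNReal.ofReal_mul (by positivity)]
    apply ENNReal.ofReal_le_ofReal
    have h1 : (0:ℝ) < ‖z‖ := lt_trans one_pos hz
    have h2 : (0:ℝ) < 1 + ‖z‖ := by linarith
    have hq : (0:ℝ) ≤ (d : ℝ) + α₀ := by positivity
    have hB : (1 + ‖z‖) ^ ((d : ℝ) + α₀) ≤ 2 ^ ((d : ℝ) + α₀) * ‖z‖ ^ ((d : ℝ) + α₀) := by
      rw [← Real.mul_rpow (by norm_num) h1.le]
      exact Real.rpow_le_rpow h2.le (by linarith) hq
    have hA : (0:ℝ) < ‖z‖ ^ ((d : ℝ) + α₀) := Real.rpow_pos_of_pos h1 _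
    have hBpos : (0:ℝ) < (1 + ‖z‖) ^ ((d : ℝ) + α₀) := Real.rpow_pos_of_pos h2 _
    rw [show -(d : ℝ) - α₀ = -((d:ℝ) + α₀) by ring, Real.rpow_neg h1.le, Real.rpow_neg h2.le]
    rw [inv_le_iff_one_le_mul₀ hA]
    calc (1:ℝ) = ((1 + ‖z‖) ^ ((d : ℝ) + α₀))⁻¹ * ((1 + ‖z‖) ^ ((d : ℝ) + α₀)) :=
          (inv_mul_cancel₀ hBpos.ne').symm
      _ ≤ ((1 + ‖z‖) ^ ((d : ℝ) + α₀))⁻¹ * (2 ^ ((d : ℝ) + α₀) * ‖z‖ ^ ((d : ℝ) + α₀)) := by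
          gcongr
      _ = 2 ^ ((d : ℝ) + α₀) * ((1 + ‖z‖) ^ ((d : ℝ) + α₀))⁻¹ * ‖z‖ ^ ((d : ℝ) + α₀) := by ring
  calc tailC d α₀ ≤ ∫⁻ z in {z : EuclideanSpace ℝ (Fin d) | 1 < ‖z‖},
        ENNReal.ofReal (2 ^ ((d : ℝ) + α₀)) * ENNReal.ofReal ((1 + ‖z‖) ^ (-((d : ℝ) + α₀))) :=
      setLIntegral_mono' hS hpt
    _ = ENNReal.ofReal (2 ^ ((d : ℝ) + α₀)) * ∫⁻ z in {z : EuclideanSpace ℝ (Fin d) | 1 < ‖z‖},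
        ENNReal.ofReal ((1 + ‖z‖) ^ (-((d : ℝ) + α₀))) := lintegral_const_mul' _ _ ENNReal.ofReal_ne_top
    _ ≤ ENNReal.ofReal (2 ^ ((d : ℝ) + α₀)) * ∫⁻ z : EuclideanSpace ℝ (Fin d),
        ENNReal.ofReal ((1 + ‖z‖) ^ (-((d : ℝ) + α₀))) := by gcongr; exact Measure.restrict_le_self
    _ < ∞ := ENNReal.mul_lt_top ENNReal.ofReal_lt_top hfin

lemma tail_le (d : ℕ) {α₀ α R : ℝ} (h0 : 0 < α₀) (hα : α₀ ≤ α) (hR : 0 < R) :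
    ∫⁻ z in {z : EuclideanSpace ℝ (Fin d) | R < ‖z‖}, ENNReal.ofReal (‖z‖ ^ (-(d : ℝ) - α))
      ≤ ENNReal.ofReal (R ^ (-α)) * tailC d α₀ := by
  set E := EuclideanSpace ℝ (Fin d)
  set g : E → ℝ≥0∞ :=
    fun z => {z : E | R < ‖z‖}.indicator (fun z => ENNReal.ofReal (‖z‖ ^ (-(d : ℝ) - α))) z with hg
  have hS : MeasurableSet {z : E | R < ‖z‖} :=
    (isOpen_lt continuous_const continuous_norm).measurableSet
  have hgm : Measurable g := by
    apply Measurable.indicator ?_ hS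
    fun_prop
  have hmap : ∫⁻ z, g z ∂(Measure.map (fun z : E => R • z) volume) = ∫⁻ z, g (R • z) :=
    lintegral_map hgm (measurable_const_smul R)
  rw [show (fun z : E => R • z) = (R • ·) from rfl,
    Measure.map_addHaar_smul volume hR.ne', lintegral_smul_measure] at hmap
  have hfr : Module.finrank ℝ E = d := finrank_euclideanSpace_fin
  -- T = ofReal (R ^ d) * ∫⁻ z, g (R • z)
  have habs : |(R ^ Module.finrank ℝ E)⁻¹| = (R ^ d)⁻¹ := by
    rw [hfr, abs_of_pos (by positivity)]
  have hT : (∫⁻ z, g z ∂(volume : Measure E)) =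
      ENNReal.ofReal (R ^ d) * ∫⁻ z, g (R • z) ∂(volume : Measure E) := by
    rw [← hmap, habs, smul_eq_mul, ← mul_assoc, ← ENNReal.ofReal_mul (by positivity),
      mul_inv_cancel₀ (by positivity), ENNReal.ofReal_one, one_mul]
  -- pointwise bound on g (R • z)
  have hpt : ∀ z : E, g (R • z) ≤ ENNReal.ofReal (R ^ (-(d : ℝ) - α)) *
      ({z : E | 1 < ‖z‖}.indicator (fun z => ENNReal.ofReal (‖z‖ ^ (-(d : ℝ) - α₀))) z) := by
    intro z
    have hnrm : ‖R • z‖ = R * ‖z‖ := by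
      rw [norm_smul, Real.norm_eq_abs, abs_of_pos hR]
    by_cases hz : 1 < ‖z‖
    · have hmem : R • z ∈ {z : E | R < ‖z‖} := by
        simp only [Set.mem_setOf_eq, hnrm]
        nlinarith
      rw [hg]
      simp only [Set.indicator_of_mem hmem, Set.indicator_of_mem (show z ∈ {z : E | 1 < ‖z‖} from hz)]
      rw [hnrm, Real.mul_rpow hR.le (norm_nonneg z),
        ENNReal.ofReal_mul (by positivity)]
      exact mul_le_mul_right (ENNReal.ofReal_le_ofReal
        (Real.rpow_le_rpow_of_exponent_le hz.le (by linarith))) _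
    · have hmem : R • z ∉ {z : E | R < ‖z‖} := by
        simp only [Set.mem_setOf_eq, hnrm, not_lt] at hz ⊢
        nlinarith [norm_nonneg z]
      rw [hg]
      simp only [Set.indicator_of_notMem hmem]
      exact zero_le
  have hbd : (∫⁻ z, g (R • z) ∂(volume : Measure E)) ≤
      ENNReal.ofReal (R ^ (-(d : ℝ) - α)) * tailC d α₀ := by
    calc (∫⁻ z, g (R • z) ∂(volume : Measure E))
        ≤ ∫⁻ z, ENNReal.ofReal (R ^ (-(d : ℝ) - α)) *
            ({z : E | 1 < ‖z‖}.indicator (fun z => ENNReal.ofReal (‖z‖ ^ (-(d : ℝ) - α₀))) z)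
            ∂(volume : Measure E) := lintegral_mono hpt
      _ = ENNReal.ofReal (R ^ (-(d : ℝ) - α)) * ∫⁻ z,
            ({z : E | 1 < ‖z‖}.indicator (fun z => ENNReal.ofReal (‖z‖ ^ (-(d : ℝ) - α₀))) z)
            ∂(volume : Measure E) := lintegral_const_mul' _ _ ENNReal.ofReal_ne_top
      _ = ENNReal.ofReal (R ^ (-(d : ℝ) - α)) * tailC d α₀ := by
          rw [lintegral_indicator ((isOpen_lt continuous_const continuous_norm).measurableSet)]
          rfl
  calc ∫⁻ z in {z : E | R < ‖z‖}, ENNReal.ofReal (‖z‖ ^ (-(d : ℝ) - α))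
      = ∫⁻ z, g z ∂(volume : Measure E) := by
        rw [hg, lintegral_indicator hS]
    _ = ENNReal.ofReal (R ^ d) * ∫⁻ z, g (R • z) ∂(volume : Measure E) := hT
    _ ≤ ENNReal.ofReal (R ^ d) * (ENNReal.ofReal (R ^ (-(d : ℝ) - α)) * tailC d α₀) := by gcongr
    _ = ENNReal.ofReal (R ^ (-α)) * tailC d α₀ := by
        rw [← mul_assoc, ← ENNReal.ofReal_mul (by positivity)]
        congr 2
        rw [← Real.rpow_natCast R d, ← Real.rpow_add hR]
        congr 1
        ring

lemma mass_le (d : ℕ) {α₀ α s : ℝ} (h0 : 0 < α₀) (hα : α₀ ≤ α) (hs : 0 < s) :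
    ∫⁻ y, rhoA d α s y ≤ volume (ball (0 : EuclideanSpace ℝ (Fin d)) 1) + tailC d α₀ := by
  set E := EuclideanSpace ℝ (Fin d)
  have hαpos : 0 < α := h0.trans_le hα
  set r : ℝ := s ^ (1/α) with hrdef
  have hrpos : 0 < r := Real.rpow_pos_of_pos hs _
  have hB : MeasurableSet (closedBall (0:E) r) := measurableSet_closedBall
  have hcompl : (closedBall (0:E) r)ᶜ = {y : E | r < ‖y‖} := by
    ext y; simp [mem_closedBall_zero_iff, not_le]
  rw [← lintegral_add_compl (rhoA d α s) hB]
  have part1 : ∫⁻ y in closedBall (0:E) r, rhoA d α s y ≤ volume (ball (0:E) 1) := by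
    calc ∫⁻ y in closedBall (0:E) r, rhoA d α s y
        ≤ ∫⁻ _ in closedBall (0:E) r, ENNReal.ofReal s ^ (-(d : ℝ) / α) :=
          lintegral_mono fun y => min_le_left _ _
      _ = ENNReal.ofReal s ^ (-(d : ℝ) / α) * volume (closedBall (0:E) r) := by
          rw [setLIntegral_const]
      _ = volume (ball (0:E) 1) := by
          rw [Measure.addHaar_closedBall _ _ hrpos.le, finrank_euclideanSpace_fin,
            ENNReal.ofReal_rpow_of_pos hs, ← mul_assoc,
            ← ENNReal.ofReal_mul (Real.rpow_nonneg hs.le _)]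
          rw [show (r ^ d : ℝ) = s ^ ((1/α) * (d:ℝ)) by
            rw [hrdef, ← Real.rpow_natCast (s ^ (1/α)) d, ← Real.rpow_mul hs.le]]
          rw [← Real.rpow_add hs, show (-(d : ℝ) / α + 1/α * d) = 0 by ring,
            Real.rpow_zero, ENNReal.ofReal_one, one_mul]
  have part2 : ∫⁻ y in (closedBall (0:E) r)ᶜ, rhoA d α s y ≤ tailC d α₀ := by
    rw [hcompl]
    have hSm : MeasurableSet {y : E | r < ‖y‖} :=
      (isOpen_lt continuous_const continuous_norm).measurableSet
    have hpt : ∀ y : E, y ∈ {y : E | r < ‖y‖} →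
        rhoA d α s y ≤ ENNReal.ofReal s * ENNReal.ofReal (‖y‖ ^ (-(d : ℝ) - α)) := by
      intro y hy
      have hny : 0 < ‖y‖ := lt_trans hrpos hy
      refine le_trans (min_le_right _ _) (le_of_eq ?_)
      rw [ENNReal.ofReal_rpow_of_pos hny, div_eq_mul_inv,
        ← ENNReal.ofReal_inv_of_pos (Real.rpow_pos_of_pos hny _),
        ← Real.rpow_neg hny.le, show (-((d : ℝ) + α)) = -(d : ℝ) - α by ring]
    calc ∫⁻ y in {y : E | r < ‖y‖}, rhoA d α s y
        ≤ ∫⁻ y in {y : E | r < ‖y‖}, ENNReal.ofReal s * ENNReal.ofReal (‖y‖ ^ (-(d : ℝ) - α)) :=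
          setLIntegral_mono' hSm hpt
      _ = ENNReal.ofReal s * ∫⁻ y in {y : E | r < ‖y‖}, ENNReal.ofReal (‖y‖ ^ (-(d : ℝ) - α)) :=
          lintegral_const_mul' _ _ ENNReal.ofReal_ne_top
      _ ≤ ENNReal.ofReal s * (ENNReal.ofReal (r ^ (-α)) * tailC d α₀) := by
          gcongr
          exact tail_le d h0 hα hrpos
      _ = tailC d α₀ := by
          rw [show (r ^ (-α) : ℝ) = s⁻¹ by
            rw [hrdef, ← Real.rpow_mul hs.le, show (1/α) * (-α) = -1 by field_simp,
              Real.rpow_neg_one],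
            ← mul_assoc, ← ENNReal.ofReal_mul hs.le, mul_inv_cancel₀ hs.ne',
            ENNReal.ofReal_one, one_mul]
  exact add_le_add part1 part2

/-- For `α ∈ [α₀,2)` there is `c = c(d,α₀) > 0` with
`∫_{|z| > max(s^{1/α}, |x|/2)} ϱ_α(s, x+z) (2−α)|z|^{-d-α} dz
  ≤ c (2−α) s^{-1} ϱ_α(s,x)`. -/
theorem stmt_17 (d : ℕ) (hd : 1 ≤ d) (α₀ : ℝ) (hα₀ : α₀ ∈ Set.Ioo (0 : ℝ) 2) :
    ∃ c : ℝ, 0 < c ∧ ∀ α ∈ Set.Ico α₀ (2 : ℝ), ∀ s : ℝ, 0 < s →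
      ∀ x : EuclideanSpace ℝ (Fin d),
        (∫⁻ z in {z : EuclideanSpace ℝ (Fin d) | max (s ^ (1 / α)) (‖x‖ / 2) < ‖z‖},
            rhoA d α s (x + z) * ENNReal.ofReal ((2 - α) * ‖z‖ ^ (-(d : ℝ) - α)))
          ≤ ENNReal.ofReal (c * (2 - α) * s⁻¹) * rhoA d α s x := by
  obtain ⟨hα₀pos, hα₀2⟩ := hα₀
  set E := EuclideanSpace ℝ (Fin d)
  set V : ℝ≥0∞ := volume (ball (0 : E) 1) with hV
  set M : ℝ≥0∞ := V + tailC d α₀ with hM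
  have hMfin : M ≠ ∞ := by
    rw [hM]
    exact ENNReal.add_ne_top.2 ⟨measure_ball_lt_top.ne, (tailC_lt_top d hα₀pos).ne⟩
  set c : ℝ := (M.toReal + 1) * 2 ^ ((d : ℝ) + 2) with hc
  have hMtop : M ≤ ENNReal.ofReal (M.toReal + 1) := by
    conv_lhs => rw [← ENNReal.ofReal_toReal hMfin]
    exact ENNReal.ofReal_le_ofReal (by linarith)
  have hcpos : 0 < c := by
    have : (0:ℝ) < 2 ^ ((d : ℝ) + 2) := Real.rpow_pos_of_pos two_pos _
    have := ENNReal.toReal_nonneg (a := M)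
    positivity
  have h2pow : (1:ℝ) ≤ 2 ^ ((d : ℝ) + 2) := by
    apply Real.one_le_rpow one_le_two (by positivity)
  have hc1 : tailC d α₀ ≤ ENNReal.ofReal c := by
    calc tailC d α₀ ≤ M := le_add_self
      _ ≤ ENNReal.ofReal (M.toReal + 1) := hMtop
      _ ≤ ENNReal.ofReal c := ENNReal.ofReal_le_ofReal (by
          rw [hc]; nlinarith [ENNReal.toReal_nonneg (a := M)])
  have hc2 : ENNReal.ofReal (2 ^ ((d : ℝ) + 2)) * M ≤ ENNReal.ofReal c := by
    calc ENNReal.ofReal (2 ^ ((d : ℝ) + 2)) * M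
        ≤ ENNReal.ofReal (2 ^ ((d : ℝ) + 2)) * ENNReal.ofReal (M.toReal + 1) :=
          mul_le_mul_right hMtop _
      _ = ENNReal.ofReal c := by
          rw [← ENNReal.ofReal_mul (by positivity), hc, mul_comm]
  refine ⟨c, hcpos, ?_⟩
  rintro α ⟨hα₀α, hα2⟩ s hs x
  have hαpos : 0 < α := hα₀pos.trans_le hα₀α
  have h2α : (0:ℝ) ≤ 2 - α := by linarith
  have hdnn : (0:ℝ) ≤ (d : ℝ) := Nat.cast_nonneg d
  set R : ℝ := max (s ^ (1 / α)) (‖x‖ / 2) with hRdef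
  have hspos : 0 < s ^ (1/α) := Real.rpow_pos_of_pos hs _
  have hRpos : 0 < R := lt_of_lt_of_le hspos (le_max_left _ _)
  have hsR : s ^ (1/α) ≤ R := le_max_left _ _
  have hxR : ‖x‖ / 2 ≤ R := le_max_right _ _
  set S : Set E := {z : E | R < ‖z‖} with hSdef
  have hSm : MeasurableSet S := (isOpen_lt continuous_const continuous_norm).measurableSet
  set P : ℝ≥0∞ := ENNReal.ofReal s ^ (-(d : ℝ) / α) with hP
  have hPeq : P = ENNReal.ofReal (s ^ (-(d : ℝ) / α)) := ENNReal.ofReal_rpow_of_pos hs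
  have hPfin : P ≠ ∞ := by rw [hPeq]; exact ENNReal.ofReal_ne_top
  have hRinv : R ^ (-α) ≤ s⁻¹ := by
    calc R ^ (-α) ≤ (s ^ (1/α)) ^ (-α) :=
        Real.rpow_le_rpow_of_nonpos hspos hsR (by linarith)
      _ = s⁻¹ := by
        rw [← Real.rpow_mul hs.le, show (1/α) * (-α) = -1 by field_simp, Real.rpow_neg_one]
  -- Bound 1
  have bound1 : (∫⁻ z in S, rhoA d α s (x + z) * ENNReal.ofReal ((2 - α) * ‖z‖ ^ (-(d : ℝ) - α)))
      ≤ ENNReal.ofReal (c * (2 - α) * s⁻¹) * P := by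
    calc (∫⁻ z in S, rhoA d α s (x + z) * ENNReal.ofReal ((2 - α) * ‖z‖ ^ (-(d : ℝ) - α)))
        ≤ ∫⁻ z in S, (P * ENNReal.ofReal (2 - α)) * ENNReal.ofReal (‖z‖ ^ (-(d : ℝ) - α)) := by
          apply lintegral_mono fun z => ?_
          rw [ENNReal.ofReal_mul h2α, ← mul_assoc]
          exact mul_le_mul_left (mul_le_mul_left (min_le_left _ _) _) _
      _ = (P * ENNReal.ofReal (2 - α)) * ∫⁻ z in S, ENNReal.ofReal (‖z‖ ^ (-(d : ℝ) - α)) :=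
          lintegral_const_mul' _ _ (ENNReal.mul_ne_top hPfin ENNReal.ofReal_ne_top)
      _ ≤ (P * ENNReal.ofReal (2 - α)) * (ENNReal.ofReal (R ^ (-α)) * tailC d α₀) :=
          mul_le_mul_right (tail_le d hα₀pos hα₀α hRpos) _
      _ ≤ (P * ENNReal.ofReal (2 - α)) * (ENNReal.ofReal s⁻¹ * ENNReal.ofReal c) := by
          exact mul_le_mul_right (mul_le_mul (ENNReal.ofReal_le_ofReal hRinv) hc1 zero_le zero_le) _
      _ = ENNReal.ofReal (c * (2 - α) * s⁻¹) * P := by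
          have hofc : ENNReal.ofReal (c * (2 - α) * s⁻¹) =
              ENNReal.ofReal c * (ENNReal.ofReal (2 - α) * ENNReal.ofReal s⁻¹) := by
            rw [← ENNReal.ofReal_mul h2α, ← ENNReal.ofReal_mul hcpos.le]
            congr 1; ring
          rw [hofc]; ring
  -- Bound 2
  have bound2 : (∫⁻ z in S, rhoA d α s (x + z) * ENNReal.ofReal ((2 - α) * ‖z‖ ^ (-(d : ℝ) - α)))
      ≤ ENNReal.ofReal (c * (2 - α) * s⁻¹) *
        (ENNReal.ofReal s / ENNReal.ofReal ‖x‖ ^ ((d : ℝ) + α)) := by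
    rcases eq_or_lt_of_le (norm_nonneg x) with hx0 | hx0
    · -- ‖x‖ = 0 : RHS is ∞
      have hQ : ENNReal.ofReal s / ENNReal.ofReal ‖x‖ ^ ((d : ℝ) + α) = ∞ := by
        rw [← hx0, ENNReal.ofReal_zero, ENNReal.zero_rpow_of_pos (by positivity),
          ENNReal.div_zero (by simpa using hs)]
      rw [hQ, ENNReal.mul_top (by
        simp only [ne_eq, ENNReal.ofReal_eq_zero, not_le]
        exact mul_pos (mul_pos hcpos (by linarith)) (by positivity))]
      exact le_top
    · -- ‖x‖ > 0
      have hx2 : (0:ℝ) < ‖x‖ / 2 := by positivity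
      have hpt : ∀ z ∈ S, rhoA d α s (x + z) * ENNReal.ofReal ((2 - α) * ‖z‖ ^ (-(d : ℝ) - α))
          ≤ rhoA d α s (x + z) *
            (ENNReal.ofReal (2 - α) * ENNReal.ofReal ((‖x‖ / 2) ^ (-(d : ℝ) - α))) := by
        intro z hz
        apply mul_le_mul_right
        rw [ENNReal.ofReal_mul h2α]
        apply mul_le_mul_right
        apply ENNReal.ofReal_le_ofReal
        exact Real.rpow_le_rpow_of_nonpos hx2 (le_of_lt (lt_of_le_of_lt hxR hz)) (by linarith)
      have hxpow : (‖x‖ / 2) ^ (-(d : ℝ) - α) ≤ ‖x‖ ^ (-(d : ℝ) - α) * 2 ^ ((d : ℝ) + 2) := by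
        rw [Real.div_rpow (norm_nonneg x) (by norm_num), div_eq_mul_inv,
          ← Real.rpow_neg (by norm_num)]
        apply mul_le_mul_of_nonneg_left _ (Real.rpow_nonneg (norm_nonneg x) _)
        apply Real.rpow_le_rpow_of_exponent_le one_le_two
        linarith
      calc (∫⁻ z in S, rhoA d α s (x + z) * ENNReal.ofReal ((2 - α) * ‖z‖ ^ (-(d : ℝ) - α)))
          ≤ ∫⁻ z in S, rhoA d α s (x + z) *
              (ENNReal.ofReal (2 - α) * ENNReal.ofReal ((‖x‖ / 2) ^ (-(d : ℝ) - α))) :=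
            setLIntegral_mono' hSm hpt
        _ = (∫⁻ z in S, rhoA d α s (x + z)) *
              (ENNReal.ofReal (2 - α) * ENNReal.ofReal ((‖x‖ / 2) ^ (-(d : ℝ) - α))) :=
            lintegral_mul_const' _ _ (ENNReal.mul_ne_top ENNReal.ofReal_ne_top ENNReal.ofReal_ne_top)
        _ ≤ (∫⁻ z, rhoA d α s (x + z)) *
              (ENNReal.ofReal (2 - α) * ENNReal.ofReal ((‖x‖ / 2) ^ (-(d : ℝ) - α))) :=
            mul_le_mul_left (setLIntegral_le_lintegral _ _) _
        _ = (∫⁻ y, rhoA d α s y) *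
              (ENNReal.ofReal (2 - α) * ENNReal.ofReal ((‖x‖ / 2) ^ (-(d : ℝ) - α))) := by
            rw [lintegral_add_left_eq_self (rhoA d α s) x]
        _ ≤ M * (ENNReal.ofReal (2 - α) *
              (ENNReal.ofReal (‖x‖ ^ (-(d : ℝ) - α)) * ENNReal.ofReal (2 ^ ((d : ℝ) + 2)))) := by
            apply mul_le_mul (mass_le d hα₀pos hα₀α hs) _ zero_le zero_le
            apply mul_le_mul_right
            rw [← ENNReal.ofReal_mul (Real.rpow_nonneg (norm_nonneg x) _)]
            exact ENNReal.ofReal_le_ofReal hxpow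
        _ ≤ ENNReal.ofReal c * (ENNReal.ofReal (2 - α) * ENNReal.ofReal (‖x‖ ^ (-(d : ℝ) - α))) := by
            calc M * (ENNReal.ofReal (2 - α) *
                  (ENNReal.ofReal (‖x‖ ^ (-(d : ℝ) - α)) * ENNReal.ofReal (2 ^ ((d : ℝ) + 2))))
                = (ENNReal.ofReal (2 ^ ((d : ℝ) + 2)) * M) *
                  (ENNReal.ofReal (2 - α) * ENNReal.ofReal (‖x‖ ^ (-(d : ℝ) - α))) := by ring
              _ ≤ ENNReal.ofReal c * (ENNReal.ofReal (2 - α) * ENNReal.ofReal (‖x‖ ^ (-(d : ℝ) - α))) :=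
                  mul_le_mul_left hc2 _
        _ = ENNReal.ofReal (c * (2 - α) * s⁻¹) *
              (ENNReal.ofReal s / ENNReal.ofReal ‖x‖ ^ ((d : ℝ) + α)) := by
            rw [ENNReal.ofReal_rpow_of_pos hx0,
              ← ENNReal.ofReal_div_of_pos (Real.rpow_pos_of_pos hx0 _),
              ← ENNReal.ofReal_mul (mul_nonneg (mul_nonneg hcpos.le h2α) (inv_nonneg.2 hs.le)),
              ← ENNReal.ofReal_mul h2α, ← ENNReal.ofReal_mul hcpos.le]
            congr 1
            rw [show (-(d : ℝ) - α) = -((d : ℝ) + α) by ring, Real.rpow_neg (norm_nonneg x)]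
            field_simp
  rw [rhoA]
  rcases le_total P (ENNReal.ofReal s / ENNReal.ofReal ‖x‖ ^ ((d : ℝ) + α)) with h | h
  · rw [min_eq_left h]; exact bound1
  · rw [min_eq_right h]; exact bound2
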